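/- Let F be a field with char F = 2, let α₁,α₂,α₄,β₁ ∈ F, and let A = A_{1,2}(α₁,α₂,α₄,β₁) = [[α₁, α₂, α₂+1, α₄],[β₁, α₁, 1+α₁, α₂]]. Then the only invertible 2×2 matrix g over F with gA = A(g⊗g) is the identity matrix, and the only 2×2 matrix D with DA = A(D⊗I₂ + I₂⊗D) is the zero matrix. -/
import Mathlib


open Matrix Kronecker

/-- The matrix of structure constants (MSC) of a 2-dimensional algebra, as a
`2 × (2 × 2)` matrix: the column indexed by `(j,k)` corresponds to the product
`e_j · e_k`, so the columns in order `(0,0), (0,1), (1,0), (1,1)` carry the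
entries `α₁ α₂ α₃ α₄` (first row) and `β₁ β₂ β₃ β₄` (second row). -/
def MSC {F : Type*} [Field F] (a1 a2 a3 a4 b1 b2 b3 b4 : F) :
    Matrix (Fin 2) (Fin 2 × Fin 2) F :=
  Matrix.of fun i j => !![a1, a2, a3, a4; b1, b2, b3, b4] i (finProdFinEquiv j)

/-- `g` is an automorphism matrix of the algebra with MSC `A`:
`g` is invertible and `g • A = A • (g ⊗ g)`. -/
def IsAutoMat {F : Type*} [Field F] (A : Matrix (Fin 2) (Fin 2 × Fin 2) F)
    (g : Matrix (Fin 2) (Fin 2) F) : Prop :=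
  IsUnit g ∧ g * A = A * (g ⊗ₖ g)

/-- `D` is a derivation matrix of the algebra with MSC `A`:
`D • A = A • (D ⊗ I + I ⊗ D)`. -/
def IsDerMat {F : Type*} [Field F] (A : Matrix (Fin 2) (Fin 2 × Fin 2) F)
    (D : Matrix (Fin 2) (Fin 2) F) : Prop :=
  D * A = A * (D ⊗ₖ (1 : Matrix (Fin 2) (Fin 2) F) + (1 : Matrix (Fin 2) (Fin 2) F) ⊗ₖ D)

set_option maxHeartbeats 2000000 in
theorem stmt_15 {F : Type*} [Field F] (hch : ringChar F = 2)
    (a1 a2 a4 b1 : F)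
    (A : Matrix (Fin 2) (Fin 2 × Fin 2) F)
    (hA : A = MSC a1 a2 (a2 + 1) a4 b1 a1 (1 + a1) a2) :
    (∀ g : Matrix (Fin 2) (Fin 2) F, IsAutoMat A g ↔ g = 1) ∧
    (∀ D : Matrix (Fin 2) (Fin 2) F, IsDerMat A D ↔ D = 0) := by
  subst hA
  have h2 : (2 : F) = 0 := by
    have := (ringChar.spec F 2).mpr (by rw [hch])
    exact_mod_cast this
  constructor
  · intro g
    constructor
    · rintro ⟨hu, heq⟩
      have E1 := congrFun (congrFun heq 0) (0,0)
      have E2 := congrFun (congrFun heq 0) (0,1)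
      have E3 := congrFun (congrFun heq 0) (1,0)
      have E4 := congrFun (congrFun heq 0) (1,1)
      have E5 := congrFun (congrFun heq 1) (0,0)
      have E6 := congrFun (congrFun heq 1) (0,1)
      have E7 := congrFun (congrFun heq 1) (1,0)
      have E8 := congrFun (congrFun heq 1) (1,1)
      simp [MSC, Matrix.mul_apply, Fintype.sum_prod_type, Fin.sum_univ_two, finProdFinEquiv,
        Matrix.kroneckerMap_apply, Matrix.of_apply] at E1 E2 E3 E4 E5 E6 E7 E8
      obtain ⟨d, hdd⟩ : ∃ d : F, d = g 0 0 * g 1 1 - g 0 1 * g 1 0 := ⟨_, rfl⟩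
      have hdne : d ≠ 0 := by
        rw [hdd, ← Matrix.det_fin_two g]
        exact ((Matrix.isUnit_iff_isUnit_det g).mp hu).ne_zero
      have hy : g 0 1 = d - g 0 0 := by
        linear_combination E2 + E3 + (-1) * hdd + (g 0 1 * g 1 0 + a4 * g 1 0 * g 1 1 + a2 * g 0 1 * g 1 0 - a2 * g 0 0 + a2 * g 0 0 * g 1 1 - a1 * g 0 1 + a1 * g 0 0 * g 0 1) * h2
      have hw : g 1 1 = d - g 1 0 := by
        linear_combination E6 + E7 + (-1) * hdd + (g 0 1 * g 1 0 + b1 * g 0 0 * g 0 1 - a2 * g 1 0 + a2 * g 1 0 * g 1 1 - a1 * g 1 1 + a1 * g 0 1 * g 1 0 + a1 * g 0 0 * g 1 1) * h2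
      have hzq : d * (g 1 0 - g 0 0 + 1) = 0 := by
        linear_combination hdd + g 0 0 * hw - g 1 0 * hy
      have hz : g 1 0 = g 0 0 - 1 := by
        have h := (mul_eq_zero.mp hzq).resolve_left hdne
        linear_combination h
      have hsq : (a1 + a2 + a4 + b1) * ((g 0 0 - 1) * (g 0 0 - 1)) = 0 := by
        linear_combination E1 + E5 + (-b1) * hy + (-b1) * hw + ((2) * g 0 0 + b1 - a4 + a4 * g 1 0 + a4 * g 0 0 - a2 + a2 * g 1 0 + (3) * a2 * g 0 0 - a1 + (2) * a1 * g 0 0) * hz + (-g 0 0 + g 0 0 * g 0 0 - b1 * d + b1 * g 0 0 * g 0 0 + a4 + (-2) * a4 * g 0 0 + a4 * g 0 0 * g 0 0 + a2 + (-3) * a2 * g 0 0 + (2) * a2 * g 0 0 * g 0 0 + a1 + (-3) * a1 * g 0 0 + (2) * a1 * g 0 0 * g 0 0) * h2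
      have hsq2 : (a1 + a2 + a4 + b1) * ((g 0 0 - d) * (g 0 0 - d)) = 0 := by
        linear_combination E4 + E8 + ((2) * g 1 1 + b1 * d + b1 * g 0 1 - b1 * g 0 0 - a2 + (2) * a2 * g 1 1 + a1 * d + (2) * a1 * g 1 1 + a1 * g 0 1 - a1 * g 0 0) * hy + ((2) * d + (-2) * g 0 0 + a4 * d + a4 * g 1 1 - a4 * g 1 0 - a2 + (3) * a2 * d + a2 * g 1 1 - a2 * g 1 0 + (-2) * a2 * g 0 0 + (2) * a1 * d + (-2) * a1 * g 0 0) * hw + ((-2) * d + (2) * g 0 0 + (-2) * a4 + (-2) * a4 * d + a4 * g 1 0 + a4 * g 0 0 + (-4) * a2 * d + a2 * g 1 0 + (3) * a2 * g 0 0 + (-2) * a1 * d + (2) * a1 * g 0 0) * hz + (d + d * d - g 0 0 + (-2) * g 0 0 * d + g 0 0 * g 0 0 + b1 * d * d + (-2) * b1 * g 0 0 * d + b1 * g 0 0 * g 0 0 + a4 + a4 * d + a4 * d * d + (-2) * a4 * g 0 0 + (-2) * a4 * g 0 0 * d + a4 * g 0 0 * g 0 0 + a2 * d + (2) * a2 *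 d * d - a2 * g 0 0 + (-4) * a2 * g 0 0 * d + (2) * a2 * g 0 0 * g 0 0 + a1 * d + (2) * a1 * d * d - a1 * g 0 0 + (-4) * a1 * g 0 0 * d + (2) * a1 * g 0 0 * g 0 0) * h2
      have key : g 0 0 = 1 ∧ d = 1 := by
        by_cases hs : a1 + a2 + a4 + b1 = 0
        · have hb1 : b1 = -a1 - a2 - a4 := by linear_combination hs
          have hG1 : (a1 + a4) * (d - 1) = 0 := by
            linear_combination E2 + E6 + ((2) * g 1 0 + b1 * g 0 0 + a2 * g 1 0 - a1 + a1 * g 1 0 + a1 * g 0 0) * hy + (a4 * g 1 0 + a2 * g 1 0 + a2 * g 0 0 - a1 + a1 * g 0 0) * hw + ((2) * d + (-2) * g 0 0 + a4 + a4 * d - a4 * g 1 0 - a4 * g 0 0 + (2) * a2 * d - a2 * g 1 0 + (-3) * a2 * g 0 0 + a1 + a1 * d + (-2) * a1 * g 0 0) * hz + (g 0 0 * d - g 0 0 * g 0 0) * hb1 + (-d + g 0 0 + g 0 0 * d - g 0 0 * g 0 0 - a4 + a4 * g 0 0 - a2 * d + a2 * g 0 0 + a2 * g 0 0 * d - a2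 * g 0 0 * g 0 0 - a1 - a1 * d + (2) * a1 * g 0 0 + a1 * g 0 0 * d - a1 * g 0 0 * g 0 0) * h2
          have hd1 : d = 1 := by
            by_cases ha : a1 + a4 = 0
            · have ha4 : a4 = -a1 := by linear_combination ha
              have hdd1 : d * (d - 1) = 0 := by
                linear_combination E1 + E4 + (g 1 1 - b1 - a2 + (2) * a2 * g 1 1 + a1 * d + a1 * g 0 1 - a1 * g 0 0) * hy + (d - g 0 0 + a4 * d + a4 * g 1 1 - a4 * g 1 0 + (2) * a2 * d + (-2) * a2 * g 0 0) * hw + (-d + (2) * g 0 0 + (-2) * a4 + (-2) * a4 * d + (2) * a4 * g 1 0 + (2) * a4 * g 0 0 + (-2) * a2 * d + (4) * a2 * g 0 0) * hz + (-d + g 0 0) * hb1 + ((2) + (3) * d + d * d + (-6) * g 0 0 + (-2) * g 0 0 * d + (2) * g 0 0 * g 0 0) * ha4 + (d * d - g 0 0 - g 0 0 * d + g 0 0 * g 0 0 + a2 * d + a2 * d * d + (-2) * a2 * g 0 0 + (-2) * a2 * g 0 0 * d + (2) * a2 * g 0 0 * g 0 0 - a1 - a1 * d + (2) * a1 * g 0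 0) * h2
              have h := (mul_eq_zero.mp hdd1).resolve_left hdne
              linear_combination h
            · have h := (mul_eq_zero.mp hG1).resolve_left ha
              linear_combination h
          have hx : g 0 0 = 1 := by
            linear_combination E1 + E2 + (g 1 0 - b1 + a2 * g 1 0 - a1 + a1 * g 0 0) * hy + (a4 * g 1 0 + a2 * g 0 0) * hw + (d + a4 * d + a2 * d) * hz + ((-1) + g 0 0 - b1 - a4 + a4 * g 0 0 - a2 + (2) * a2 * g 0 0 - a1 + a1 * g 0 0) * hd1 + ((-1) + g 0 0) * hb1 + ((-1) + g 0 0) * h2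
          exact ⟨hx, hd1⟩
        · have hx1 : (g 0 0 - 1) * (g 0 0 - 1) = 0 := (mul_eq_zero.mp hsq).resolve_left hs
          have hx : g 0 0 = 1 := by
            have h := mul_self_eq_zero.mp hx1
            linear_combination h
          have hx2 : (g 0 0 - d) * (g 0 0 - d) = 0 := (mul_eq_zero.mp hsq2).resolve_left hs
          have hd1 : d = 1 := by
            have h := mul_self_eq_zero.mp hx2
            linear_combination hx - h
          exact ⟨hx, hd1⟩
      obtain ⟨hx, hd1⟩ := key
      have e10 : g 1 0 = 0 := by rw [hz, hx]; ring
      have e01 : g 0 1 = 0 := by rw [hy, hd1, hx]; ring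
      have e11 : g 1 1 = 1 := by rw [hw, hd1, e10]; ring
      ext i j
      fin_cases i <;> fin_cases j <;>
        simp [hx, e01, e10, e11, Matrix.one_apply]
    · rintro rfl
      refine ⟨isUnit_one, ?_⟩
      rw [Matrix.one_kronecker_one, Matrix.one_mul, Matrix.mul_one]
  · intro D
    constructor
    · intro h
      have heq : D * MSC a1 a2 (a2 + 1) a4 b1 a1 (1 + a1) a2 =
          MSC a1 a2 (a2 + 1) a4 b1 a1 (1 + a1) a2 *
            (D ⊗ₖ (1 : Matrix (Fin 2) (Fin 2) F) + (1 : Matrix (Fin 2) (Fin 2) F) ⊗ₖ D) := h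
      have D1 := congrFun (congrFun heq 0) (0,0)
      have D2 := congrFun (congrFun heq 0) (0,1)
      have D3 := congrFun (congrFun heq 0) (1,0)
      have D4 := congrFun (congrFun heq 0) (1,1)
      have D6 := congrFun (congrFun heq 1) (0,1)
      have D7 := congrFun (congrFun heq 1) (1,0)
      simp [MSC, Matrix.mul_apply, Fintype.sum_prod_type, Fin.sum_univ_two, finProdFinEquiv,
        Matrix.kroneckerMap_apply, Matrix.of_apply, Matrix.one_apply,
        Matrix.add_apply] at D1 D2 D3 D4 D6 D7
      have hwy : D 1 1 = D 0 1 := by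
        linear_combination D2 + D3 + (D 1 1 - D 0 1 + a4 * D 1 0 + a2 * D 1 1) * h2
      have hzx : D 1 0 = D 0 0 := by
        linear_combination D6 + D7 + (b1 * D 0 1 + a1 * D 0 0) * h2
      have hy0 : D 0 1 = 0 := by
        linear_combination D2 + D4 + ((2) * a4 + a2) * hwy + a4 * hzx + (D 0 1 + a4 * D 0 1 + a2 * D 0 1) * h2
      have hx0 : D 0 0 = 0 := by
        linear_combination D1 + D6 + ((1) + (2) * a2) * hzx + (D 0 0 + a2 * D 0 0 + a1 * D 0 0) * h2
      ext i j
      fin_cases i <;> fin_cases j <;>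
        simp [hx0, hy0, hwy, hzx]
    · rintro rfl
      simp only [IsDerMat, Matrix.zero_kronecker, Matrix.kronecker_zero, add_zero,
        Matrix.mul_zero, Matrix.zero_mul]
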